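/- For every player-specific congestion game on a tree there exist common strictly increasing delay functions d_r : ℕ → ℕ, one for each resource r, that preserve every player's type: for every player i, all resources r, r' ∈ Σ_i and all congestion values 1 ≤ k, k' ≤ n, d^i_r(k) < d^i_{r'}(k') if and only if d_r(k) < d_{r'}(k'). Consequently, the transition graph of the player-specific game equals the transition graph of the standard singleton congestion game obtained by replacing each d^i_r with d_r. -/

import Mathlib

/-- States compatible with strategy sets `strat`. -/
abbrev GameState {N : ℕ} {R : Type} (strat : Fin N → Finset R) :=
  {S : Fin N → R // ∀ i, S i ∈ strat i}

/-- The congestion `n_r(S)`: the number of players allocating resource `r` in state `S`. -/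
def congOf {N : ℕ} {R : Type} [Fintype R] [DecidableEq R] {strat : Fin N → Finset R}
    (S : GameState strat) (r : R) : ℕ :=
  (Finset.univ.filter fun i => S.1 i = r).card

/-- The current resource of player `i` is a best response to `S`
(w.r.t. strategy sets `strat` and delay functions `d`). -/
def CurrentBROf {N : ℕ} {R : Type} [Fintype R] [DecidableEq R]
    (strat : Fin N → Finset R) (d : Fin N → R → ℕ → ℕ)
    (S : GameState strat) (i : Fin N) : Prop :=
  ∀ r' ∈ strat i, r' ≠ S.1 i →
    d i (S.1 i) (congOf S (S.1 i)) ≤ d i r' (congOf S r' + 1)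

/-- `S'` is obtained from `S` by a best-response step of player `i`:
player `i`'s current resource is not a best response, player `i` switches to a
best response, and all other players keep their resources. -/
def StepBy {N : ℕ} {R : Type} [Fintype R] [DecidableEq R]
    (strat : Fin N → Finset R) (d : Fin N → R → ℕ → ℕ) (i : Fin N)
    (S S' : GameState strat) : Prop :=
  ¬ CurrentBROf strat d S i ∧
  S'.1 i ≠ S.1 i ∧
  (∀ r' ∈ strat i, r' ≠ S.1 i →
    d i (S'.1 i) (congOf S (S'.1 i) + 1) ≤ d i r' (congOf S r' + 1)) ∧
  d i (S'.1 i) (congOf S (S'.1 i) + 1) ≤ d i (S.1 i) (congOf S (S.1 i)) ∧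
  (∀ j, j ≠ i → S'.1 j = S.1 j)

/-- A player-specific singleton congestion game with `N` players and resources `R`:
strategy sets `strat i ⊆ R`, strictly increasing player-specific delay functions
`d i r`, with ties broken (for each player, the delays `d i r k`, `r ∈ strat i`,
`1 ≤ k ≤ N`, are pairwise distinct). -/
structure PSGame (N : ℕ) (R : Type) [Fintype R] [DecidableEq R] where
  strat : Fin N → Finset R
  d : Fin N → R → ℕ → ℕ
  mono : ∀ i r, StrictMono (d i r)
  tie : ∀ i : Fin N, ∀ r ∈ strat i, ∀ r' ∈ strat i, ∀ k, 1 ≤ k → k ≤ N →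
    ∀ k', 1 ≤ k' → k' ≤ N → (r ≠ r' ∨ k ≠ k') → d i r k ≠ d i r' k'

namespace PSGame

variable {N : ℕ} {R : Type} [Fintype R] [DecidableEq R]

abbrev State (G : PSGame N R) := GameState G.strat

/-- One best-response step of the game `G` (an edge of the transition graph `TG(G)`). -/
def Step (G : PSGame N R) (S S' : G.State) : Prop :=
  ∃ i, StepBy G.strat G.d i S S'

/-- The multigraph of the game, viewed as a simple graph: resources are nodes and
two resources are adjacent iff some player has exactly these two as strategy set. -/
def graph (G : PSGame N R) : SimpleGraph R :=
  SimpleGraph.fromRel fun r r' => ∃ i, G.strat i = {r, r'}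

/-- `G` is a player-specific congestion game on a tree: every player chooses between
exactly two resources, distinct players correspond to distinct edges (no multi-edges),
and the resulting graph on the resources is a tree. -/
def OnTree (G : PSGame N R) : Prop :=
  (∀ i, (G.strat i).card = 2) ∧ Function.Injective G.strat ∧ G.graph.IsTree

end PSGame

namespace TCDF

open SimpleGraph Finset

variable {N : ℕ} {R : Type} [Fintype R] [DecidableEq R]

noncomputable def lvl (G : PSGame N R) (r0 r : R) : ℕ := G.graph.dist r0 r

open scoped Classical in
noncomputable def par (G : PSGame N R) (r0 r : R) : R :=
  if h : ∃ p, G.graph.Adj p r ∧ lvl G r0 p + 1 = lvl G r0 r then h.choose else r0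

open scoped Classical in
noncomputable def belowVal (G : PSGame N R) (r0 r : R) (k : ℕ) : ℕ :=
  ((Finset.Icc 1 N).filter fun k' =>
    ∃ i : Fin N, r ∈ G.strat i ∧ par G r0 r ∈ G.strat i ∧
      G.d i (par G r0 r) k' < G.d i r k).card

/-- child placement formula -/
noncomputable def childVal (N : ℕ) (f : ℕ → ℚ) (b k : ℕ) : ℚ :=
  (if b = 0 then f 1 - 1 else f b) +
    (k : ℚ) * ((if b = N then f N + 1 else f (b + 1)) - (if b = 0 then f 1 - 1 else f b)) / (N + 1)

noncomputable def Fval (G : PSGame N R) (r0 : R) : ℕ → R → ℕ → ℚ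
  | 0 => fun _ k => (k : ℚ)
  | (t + 1) => fun r k =>
      if lvl G r0 r = t + 1 then
        childVal N (Fval G r0 t (par G r0 r)) (belowVal G r0 r k) k
      else Fval G r0 t r k

noncomputable def phi (G : PSGame N R) (r0 : R) (r : R) (k : ℕ) : ℚ :=
  Fval G r0 (lvl G r0 r) r k

variable {G : PSGame N R} {r0 : R}

lemma dist_le_succ_of_adj (hc : G.graph.Connected) {p r : R} (h : G.graph.Adj p r) :
    lvl G r0 r ≤ lvl G r0 p + 1 := by
  have h1 : G.graph.dist p r ≤ 1 := by
    have := SimpleGraph.dist_le (Walk.cons h (Walk.nil))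
    simpa using this
  have h2 := hc.dist_triangle (u := r0) (v := p) (w := r)
  unfold lvl
  omega

lemma exists_parent (hc : G.graph.Connected) {r : R} (hr : r ≠ r0) :
    ∃ p, G.graph.Adj p r ∧ lvl G r0 p + 1 = lvl G r0 r := by
  obtain ⟨w, hw⟩ := hc.exists_walk_length_eq_dist r0 r
  have hnn : ¬ w.reverse.Nil := Walk.not_nil_of_ne hr
  rw [Walk.not_nil_iff] at hnn
  obtain ⟨u, h, q, hq⟩ := hnn
  refine ⟨u, h.symm, ?_⟩
  have hlen : q.length + 1 = w.length := by
    have := congrArg Walk.length hq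
    simpa [Nat.add_comm] using this.symm
  have h1 : lvl G r0 u ≤ q.length := by
    have := SimpleGraph.dist_le q.reverse
    simpa [lvl, Walk.length_reverse] using this
  have h2 : lvl G r0 r ≤ lvl G r0 u + 1 := dist_le_succ_of_adj hc h.symm
  have h3 : lvl G r0 r = w.length := by simp [lvl, hw]
  omega

lemma par_spec (hc : G.graph.Connected) {r : R} (hr : r ≠ r0) :
    G.graph.Adj (par G r0 r) r ∧ lvl G r0 (par G r0 r) + 1 = lvl G r0 r := by
  have h := exists_parent (r0 := r0) hc hr
  rw [par, dif_pos h]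
  exact h.choose_spec

lemma lvl_r0 : lvl G r0 r0 = 0 := SimpleGraph.dist_self

lemma ne_r0_of_lvl_pos {r : R} (h : 0 < lvl G r0 r) : r ≠ r0 := by
  rintro rfl; rw [lvl_r0] at h; omega

/-- a vertex strictly farther than p is not on a geodesic from r0 to p -/
lemma notMem_support_of_lvl_lt {p x : R} (w : G.graph.Walk r0 p)
    (hw : w.length = lvl G r0 p) (hx : lvl G r0 p < lvl G r0 x) : x ∉ w.support := by
  intro hmem
  have hxp : x ≠ p := by rintro rfl; omega
  have h1 : lvl G r0 x ≤ (w.takeUntil x hmem).length := SimpleGraph.dist_le _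
  have h2 : (w.takeUntil x hmem).length + (w.dropUntil x hmem).length = w.length := by
    have h2' := congrArg Walk.length (w.take_spec hmem)
    rwa [Walk.length_append] at h2'
  have h3 : 0 < (w.dropUntil x hmem).length := by
    rw [← Walk.not_nil_iff_lt_length]
    exact Walk.not_nil_of_ne hxp
  omega

lemma parent_unique (ht : G.graph.IsTree) {p p' r : R}
    (h1 : G.graph.Adj p r) (hl1 : lvl G r0 p + 1 = lvl G r0 r)
    (h2 : G.graph.Adj p' r) (hl2 : lvl G r0 p' + 1 = lvl G r0 r) : p = p' := by
  obtain ⟨w, hwp, hwl⟩ := ht.isConnected.exists_path_of_dist r0 p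
  obtain ⟨w', hwp', hwl'⟩ := ht.isConnected.exists_path_of_dist r0 p'
  have hx : r ∉ w.support := notMem_support_of_lvl_lt w hwl (by omega)
  have hx' : r ∉ w'.support := notMem_support_of_lvl_lt w' hwl' (by omega)
  have hP1 : (w.concat h1).IsPath := by
    rw [← Walk.isPath_reverse_iff, Walk.reverse_concat, Walk.cons_isPath_iff]
    exact ⟨hwp.reverse, by simpa [Walk.support_reverse] using hx⟩
  have hP2 : (w'.concat h2).IsPath := by
    rw [← Walk.isPath_reverse_iff, Walk.reverse_concat, Walk.cons_isPath_iff]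
    exact ⟨hwp'.reverse, by simpa [Walk.support_reverse] using hx'⟩
  have huniq := ht.existsUnique_path r0 r
  have heq : w.concat h1 = w'.concat h2 := by
    have e1 := huniq.unique hP1 hP2
    exact e1
  have hg : ((w.concat h1).reverse).getVert 1 = ((w'.concat h2).reverse).getVert 1 := by
    rw [heq]
  rw [Walk.reverse_concat, Walk.reverse_concat, Walk.getVert_cons_succ, Walk.getVert_cons_succ, Walk.getVert_zero, Walk.getVert_zero] at hg
  exact hg

lemma lvl_ne_of_adj (ht : G.graph.IsTree) {p r : R} (h : G.graph.Adj p r) :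
    lvl G r0 p ≠ lvl G r0 r := by
  intro heq
  obtain ⟨w, hwp, hwl⟩ := ht.isConnected.exists_path_of_dist r0 p
  have hww : w.length = lvl G r0 p := hwl
  have hx : r ∉ w.support := by
    intro hmem
    have h1' : lvl G r0 r ≤ (w.takeUntil r hmem).length := SimpleGraph.dist_le _
    have hxp : r ≠ p := h.ne'
    have h1 : lvl G r0 r ≤ (w.takeUntil r hmem).length := SimpleGraph.dist_le _
    have h2 : (w.takeUntil r hmem).length + (w.dropUntil r hmem).length = w.length := by
      have h2' := congrArg Walk.length (w.take_spec hmem)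
      rwa [Walk.length_append] at h2'
    have h3 : 0 < (w.dropUntil r hmem).length := by
      rw [← Walk.not_nil_iff_lt_length]
      exact Walk.not_nil_of_ne hxp
    omega
  have hP1 : (w.concat h).IsPath := by
    rw [← Walk.isPath_reverse_iff, Walk.reverse_concat, Walk.cons_isPath_iff]
    exact ⟨hwp.reverse, by simpa [Walk.support_reverse] using hx⟩
  obtain ⟨w', hwp', hwl'⟩ := ht.isConnected.exists_path_of_dist r0 r
  have heq2 : w.concat h = w' := (ht.existsUnique_path r0 r).unique hP1 hwp'
  have hlen := congrArg Walk.length heq2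
  rw [Walk.length_concat] at hlen
  have hww' : w'.length = lvl G r0 r := hwl'
  omega

end TCDF
namespace TCDF

variable {N : ℕ} {R : Type} [Fintype R] [DecidableEq R] {G : PSGame N R} {r0 : R}

open SimpleGraph Finset

lemma strat_eq_pair (hcard : ∀ i, (G.strat i).card = 2) {i : Fin N} {r r' : R}
    (hr : r ∈ G.strat i) (hr' : r' ∈ G.strat i) (hne : r ≠ r') : G.strat i = {r, r'} := by
  refine (Finset.eq_of_subset_of_card_le ?_ ?_).symm
  · intro x hx
    rcases Finset.mem_insert.1 hx with rfl | hx
    · exact hr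
    · rwa [Finset.mem_singleton.1 hx]
  · rw [hcard i, Finset.card_pair hne]

lemma player_unique (hcard : ∀ i, (G.strat i).card = 2) (hinj : Function.Injective G.strat)
    {i j : Fin N} {r r' : R} (hi : r ∈ G.strat i) (hi' : r' ∈ G.strat i)
    (hj : r ∈ G.strat j) (hj' : r' ∈ G.strat j) (hne : r ≠ r') : i = j := by
  apply hinj
  rw [strat_eq_pair hcard hi hi' hne, strat_eq_pair hcard hj hj' hne]

lemma adj_of_strat (hcard : ∀ i, (G.strat i).card = 2) {i : Fin N} {r r' : R}
    (hr : r ∈ G.strat i) (hr' : r' ∈ G.strat i) (hne : r ≠ r') : G.graph.Adj r r' := by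
  rw [PSGame.graph, SimpleGraph.fromRel_adj]
  exact ⟨hne, Or.inl ⟨i, strat_eq_pair hcard hr hr' hne⟩⟩

lemma exists_player_of_adj {p r : R} (h : G.graph.Adj p r) :
    ∃ i, p ∈ G.strat i ∧ r ∈ G.strat i := by
  rw [PSGame.graph, SimpleGraph.fromRel_adj] at h
  obtain ⟨hne, h | h⟩ := h <;> obtain ⟨i, hi⟩ := h <;> refine ⟨i, ?_, ?_⟩ <;>
    simp [hi]

lemma downset_eq_Icc {S : Finset ℕ} (hsub : S ⊆ Finset.Icc 1 N)
    (hdown : ∀ a ∈ S, ∀ b, 1 ≤ b → b ≤ a → b ∈ S) : S = Finset.Icc 1 S.card := by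
  have h2 : S ⊆ Finset.Icc 1 S.card := by
    intro x hx
    have hx1 := Finset.mem_Icc.1 (hsub hx)
    have hIcc : Finset.Icc 1 x ⊆ S := fun y hy =>
      hdown x hx y (Finset.mem_Icc.1 hy).1 (Finset.mem_Icc.1 hy).2
    have := Finset.card_le_card hIcc
    rw [Nat.card_Icc] at this
    exact Finset.mem_Icc.2 ⟨hx1.1, by omega⟩
  refine Finset.eq_of_subset_of_card_le h2 ?_
  rw [Nat.card_Icc]
  omega

open scoped Classical in
lemma belowVal_eq {i : Fin N} {r : R}
    (hcard : ∀ i, (G.strat i).card = 2) (hinj : Function.Injective G.strat)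
    (hi : r ∈ G.strat i) (hpi : par G r0 r ∈ G.strat i) (hne : r ≠ par G r0 r) (k : ℕ) :
    belowVal G r0 r k
      = ((Finset.Icc 1 N).filter fun k' => G.d i (par G r0 r) k' < G.d i r k).card := by
  unfold belowVal
  congr 1
  apply Finset.filter_congr
  intro k' _
  constructor
  · rintro ⟨j, hj1, hj2, hlt⟩
    rwa [player_unique hcard hinj hi hpi hj1 hj2 hne]
  · intro h
    exact ⟨i, hi, hpi, h⟩

lemma belowVal_le (k : ℕ) : belowVal G r0 r k ≤ N := by
  classical
  unfold belowVal
  refine le_trans (Finset.card_filter_le _ _) ?_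
  simp

lemma belowVal_mono {k k2 : ℕ} (h : k ≤ k2) : belowVal G r0 r k ≤ belowVal G r0 r k2 := by
  classical
  unfold belowVal
  apply Finset.card_le_card
  intro k' hk'
  rw [Finset.mem_filter] at hk' ⊢
  obtain ⟨hmem, j, h1, h2, hlt⟩ := hk'
  exact ⟨hmem, j, h1, h2, lt_of_lt_of_le hlt ((G.mono j r).monotone h)⟩

lemma belowVal_spec {i : Fin N} {r : R}
    (hcard : ∀ i, (G.strat i).card = 2) (hinj : Function.Injective G.strat)
    (hi : r ∈ G.strat i) (hpi : par G r0 r ∈ G.strat i) (hne : r ≠ par G r0 r)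
    {k k' : ℕ} (h1 : 1 ≤ k') (h2 : k' ≤ N) :
    (G.d i (par G r0 r) k' < G.d i r k ↔ k' ≤ belowVal G r0 r k) := by
  classical
  set S := (Finset.Icc 1 N).filter fun k' => G.d i (par G r0 r) k' < G.d i r k with hS
  have hsub : S ⊆ Finset.Icc 1 N := Finset.filter_subset _ _
  have hdown : ∀ a ∈ S, ∀ b, 1 ≤ b → b ≤ a → b ∈ S := by
    intro a ha b hb1 hba
    rw [hS, Finset.mem_filter] at ha ⊢
    have hbN : b ≤ N := le_trans hba (Finset.mem_Icc.1 ha.1).2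
    exact ⟨Finset.mem_Icc.2 ⟨hb1, hbN⟩,
      lt_of_le_of_lt ((G.mono i (par G r0 r)).monotone hba) ha.2⟩
  have hEq : S = Finset.Icc 1 S.card := downset_eq_Icc hsub hdown
  have hcardS : S.card = belowVal G r0 r k := (belowVal_eq hcard hinj hi hpi hne k).symm
  constructor
  · intro hlt
    have : k' ∈ S := by rw [hS, Finset.mem_filter]; exact ⟨Finset.mem_Icc.2 ⟨h1, h2⟩, hlt⟩
    rw [hEq, Finset.mem_Icc] at this
    omega
  · intro hle
    have : k' ∈ S := by rw [hEq, Finset.mem_Icc]; omega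
    rw [hS, Finset.mem_filter] at this
    exact this.2

end TCDF
namespace TCDF

variable {N : ℕ} {R : Type} [Fintype R] [DecidableEq R] {G : PSGame N R} {r0 : R}

open SimpleGraph Finset

lemma Fval_stable {r : R} : ∀ t, lvl G r0 r ≤ t → ∀ k, Fval G r0 t r k = phi G r0 r k := by
  intro t
  induction t with
  | zero => intro h k; unfold phi; rw [Nat.le_zero.1 h]
  | succ t ih =>
    intro h k
    by_cases hl : lvl G r0 r = t + 1
    · unfold phi; rw [hl]
    · have : lvl G r0 r ≤ t := by omega
      show (if lvl G r0 r = t + 1 then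
        childVal N (Fval G r0 t (par G r0 r)) (belowVal G r0 r k) k else Fval G r0 t r k) = _
      rw [if_neg hl]
      exact ih this k

lemma phi_r0 (k : ℕ) : phi G r0 r0 k = (k : ℚ) := by
  unfold phi
  rw [lvl_r0, Fval]

lemma phi_child {r : R} (hc : G.graph.Connected) (hr : r ≠ r0) (k : ℕ) :
    phi G r0 r k = childVal N (phi G r0 (par G r0 r)) (belowVal G r0 r k) k := by
  obtain ⟨hadj, hlvl⟩ := par_spec (r0 := r0) hc hr
  have h1 : lvl G r0 r = lvl G r0 (par G r0 r) + 1 := hlvl.symm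
  have h2 : phi G r0 r k = Fval G r0 (lvl G r0 (par G r0 r) + 1) r k := by rw [phi, h1]
  rw [h2]
  show (if lvl G r0 r = lvl G r0 (par G r0 r) + 1 then
      childVal N (Fval G r0 (lvl G r0 (par G r0 r)) (par G r0 r)) (belowVal G r0 r k) k
    else Fval G r0 (lvl G r0 (par G r0 r)) r k) = _
  rw [if_pos h1]
  exact congrArg (fun f => childVal N f (belowVal G r0 r k) k)
    (funext fun k' => Fval_stable _ le_rfl k')

section ChildVal

variable {f : ℕ → ℚ} {b k : ℕ}

/-- lower end of the gap -/
noncomputable def loV (N : ℕ) (f : ℕ → ℚ) (b : ℕ) : ℚ := if b = 0 then f 1 - 1 else f b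
noncomputable def hiV (N : ℕ) (f : ℕ → ℚ) (b : ℕ) : ℚ := if b = N then f N + 1 else f (b + 1)

lemma childVal_eq : childVal N f b k = loV N f b + (k : ℚ) * (hiV N f b - loV N f b) / (N + 1) := rfl

lemma gap_pos (hN : 1 ≤ N) (hb : b ≤ N)
    (hf : ∀ a a', 1 ≤ a → a' ≤ N → a < a' → f a < f a') : loV N f b < hiV N f b := by
  unfold loV hiV
  by_cases h0 : b = 0
  · rw [if_pos h0, if_neg (by omega)]
    have : b + 1 = 1 := by omega
    rw [this]
    linarith
  · rw [if_neg h0]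
    by_cases hbN : b = N
    · rw [if_pos hbN, hbN]; linarith
    · rw [if_neg hbN]
      exact hf b (b + 1) (by omega) (by omega) (by omega)

lemma childVal_gt_lo (hN : 1 ≤ N) (hb : b ≤ N) (hk : 1 ≤ k)
    (hf : ∀ a a', 1 ≤ a → a' ≤ N → a < a' → f a < f a') : loV N f b < childVal N f b k := by
  rw [childVal_eq]
  have hΔ := gap_pos hN hb hf
  have hk' : (0 : ℚ) < (k : ℚ) := by exact_mod_cast hk
  have : (0:ℚ) < (k : ℚ) * (hiV N f b - loV N f b) / (N + 1) := by
    apply div_pos (mul_pos hk' (by linarith)) (by positivity)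
  linarith

lemma childVal_lt_hi (hN : 1 ≤ N) (hb : b ≤ N) (hk : k ≤ N)
    (hf : ∀ a a', 1 ≤ a → a' ≤ N → a < a' → f a < f a') : childVal N f b k < hiV N f b := by
  rw [childVal_eq]
  have hΔ := gap_pos hN hb hf
  have hk' : (k : ℚ) < (N : ℚ) + 1 := by exact_mod_cast Nat.lt_succ_of_le hk
  have hpos : (0:ℚ) < (N:ℚ) + 1 := by positivity
  have h5 : (k : ℚ) * (hiV N f b - loV N f b) / (N + 1) < hiV N f b - loV N f b := by
    rw [div_lt_iff₀ hpos]
    nlinarith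
  linarith

lemma childVal_strict (hN : 1 ≤ N) (hb : b ≤ N) {k2 : ℕ} (hkk : k < k2) (hk2 : k2 ≤ N)
    (hf : ∀ a a', 1 ≤ a → a' ≤ N → a < a' → f a < f a') :
    childVal N f b k < childVal N f b k2 := by
  rw [childVal_eq, childVal_eq]
  have hΔ := gap_pos hN hb hf
  have hkk' : (k : ℚ) < (k2 : ℚ) := by exact_mod_cast hkk
  have hpos : (0:ℚ) < (N:ℚ) + 1 := by positivity
  have h6 : (k : ℚ) * (hiV N f b - loV N f b) / (N + 1)
      < (k2 : ℚ) * (hiV N f b - loV N f b) / (N + 1) := by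
    apply div_lt_div_of_pos_right ?_ hpos
    exact mul_lt_mul_of_pos_right hkk' (by linarith)
  linarith

end ChildVal

end TCDF
namespace TCDF

variable {N : ℕ} {R : Type} [Fintype R] [DecidableEq R] {G : PSGame N R} {r0 : R}

open SimpleGraph Finset

lemma inv (hN : 1 ≤ N) (hcard : ∀ i, (G.strat i).card = 2)
    (hinj : Function.Injective G.strat) (ht : G.graph.IsTree) :
    ∀ t, ∀ r : R, lvl G r0 r = t →
    (∀ k k', 1 ≤ k → k' ≤ N → k < k' → phi G r0 r k < phi G r0 r k') ∧
    (r ≠ r0 → ∀ i : Fin N, r ∈ G.strat i → par G r0 r ∈ G.strat i →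
      ∀ k, 1 ≤ k → k ≤ N → ∀ k', 1 ≤ k' → k' ≤ N →
        (G.d i r k < G.d i (par G r0 r) k' → phi G r0 r k < phi G r0 (par G r0 r) k') ∧
        (G.d i (par G r0 r) k' < G.d i r k → phi G r0 (par G r0 r) k' < phi G r0 r k)) := by
  have hc : G.graph.Connected := ht.isConnected
  intro t
  induction t with
  | zero =>
    intro r hl
    have hr : r = r0 := (hc.dist_eq_zero_iff.1 hl).symm
    subst hr
    constructor
    · intro k k' hk hk' hkk
      rw [phi_r0, phi_r0]
      exact_mod_cast hkk
    · intro h; exact absurd rfl h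
  | succ t ih =>
    intro r hl
    have hrne : r ≠ r0 := by
      apply ne_r0_of_lvl_pos (r := r)
      rw [hl]
      omega
    obtain ⟨hadj, hlvl⟩ := par_spec (r0 := r0) hc hrne
    set p := par G r0 r with hp
    have hpne : r ≠ p := hadj.ne'
    have hlp : lvl G r0 p = t := by omega
    have hf : ∀ a a', 1 ≤ a → a' ≤ N → a < a' → phi G r0 p a < phi G r0 p a' :=
      (ih p hlp).1
    have hfle : ∀ a a', 1 ≤ a → a' ≤ N → a ≤ a' → phi G r0 p a ≤ phi G r0 p a' := by
      intro a a' h1 h2 h3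
      rcases Nat.eq_or_lt_of_le h3 with rfl | hlt
      · exact le_refl _
      · exact le_of_lt (hf a a' h1 h2 hlt)
    have hble : ∀ k, belowVal G r0 r k ≤ N := fun k => belowVal_le k
    constructor
    · -- strict monotonicity at r
      intro k k2 hk1 hk2N hkk
      rw [phi_child hc hrne k, phi_child hc hrne k2]
      rcases Nat.eq_or_lt_of_le (belowVal_mono (le_of_lt hkk)
        (G := G) (r0 := r0) (r := r)) with heq | hblt
      · rw [heq]
        exact childVal_strict hN (hble k2) hkk hk2N hf
      · calc childVal N (phi G r0 p) (belowVal G r0 r k) k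
            < hiV N (phi G r0 p) (belowVal G r0 r k) :=
              childVal_lt_hi hN (hble k) (by omega) hf
          _ = phi G r0 p (belowVal G r0 r k + 1) := by
              rw [hiV, if_neg (by have := hble k2; omega)]
          _ ≤ phi G r0 p (belowVal G r0 r k2) := hfle _ _ (by omega) (hble k2) (by omega)
          _ = loV N (phi G r0 p) (belowVal G r0 r k2) := by
              rw [loV, if_neg (by omega)]
          _ < childVal N (phi G r0 p) (belowVal G r0 r k2) k2 :=
              childVal_gt_lo hN (hble k2) (by omega) hf
    · -- interleaving with the parent
      intro _ i hri hpi k hk1 hkN k' hk1' hkN'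
      have spec : ∀ k'', 1 ≤ k'' → k'' ≤ N →
          (G.d i p k'' < G.d i r k ↔ k'' ≤ belowVal G r0 r k) :=
        fun k'' h1 h2 => belowVal_spec hcard hinj hri hpi hpne h1 h2
      constructor
      · intro hd
        have hk'b : belowVal G r0 r k < k' := by
          by_contra hcon
          exact lt_asymm hd (((spec k' hk1' hkN').2 (by omega)))
        have hbN : belowVal G r0 r k ≠ N := by omega
        rw [phi_child hc hrne k]
        calc childVal N (phi G r0 p) (belowVal G r0 r k) k
            < hiV N (phi G r0 p) (belowVal G r0 r k) :=
              childVal_lt_hi hN (hble k) hkN hf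
          _ = phi G r0 p (belowVal G r0 r k + 1) := by rw [hiV, if_neg hbN]
          _ ≤ phi G r0 p k' := hfle _ _ (by omega) hkN' (by omega)
      · intro hd
        have hk'b : k' ≤ belowVal G r0 r k := (spec k' hk1' hkN').1 hd
        have hb0 : belowVal G r0 r k ≠ 0 := by omega
        rw [phi_child hc hrne k]
        calc phi G r0 p k'
            ≤ phi G r0 p (belowVal G r0 r k) := hfle _ _ hk1' (hble k) hk'b
          _ = loV N (phi G r0 p) (belowVal G r0 r k) := by rw [loV, if_neg hb0]
          _ < childVal N (phi G r0 p) (belowVal G r0 r k) k :=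
              childVal_gt_lo hN (hble k) hk1 hf

end TCDF
namespace TCDF

variable {N : ℕ} {R : Type} [Fintype R] [DecidableEq R] {G : PSGame N R} {r0 : R}

open SimpleGraph Finset

lemma pres (hN : 1 ≤ N) (hcard : ∀ i, (G.strat i).card = 2)
    (hinj : Function.Injective G.strat) (ht : G.graph.IsTree) :
    ∀ i : Fin N, ∀ r ∈ G.strat i, ∀ r' ∈ G.strat i,
      ∀ k, 1 ≤ k → k ≤ N → ∀ k', 1 ≤ k' → k' ≤ N →
        (G.d i r k < G.d i r' k' ↔ phi G r0 r k < phi G r0 r' k') := by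
  have hc : G.graph.Connected := ht.isConnected
  have hA : ∀ r : R, ∀ k k', 1 ≤ k → k' ≤ N → k < k' → phi G r0 r k < phi G r0 r k' :=
    fun r => (inv hN hcard hinj ht (lvl G r0 r) r rfl).1
  have hB := fun (r : R) => (inv (r0 := r0) hN hcard hinj ht (lvl G r0 r) r rfl).2
  intro i r hr r' hr' k hk1 hkN k' hk1' hkN'
  by_cases hrr : r = r'
  · subst hrr
    rw [(G.mono i r).lt_iff_lt]
    constructor
    · exact fun h => hA r k k' hk1 hkN' h
    · intro h
      by_contra hcon
      have hle : k' ≤ k := by omega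
      rcases Nat.eq_or_lt_of_le hle with rfl | hlt
      · exact lt_irrefl _ h
      · exact lt_asymm h (hA r k' k hk1' hkN hlt)
  · have hadj : G.graph.Adj r r' := adj_of_strat hcard hr hr' hrr
    have hdiff : lvl G r0 r ≠ lvl G r0 r' := lvl_ne_of_adj ht hadj
    have h1 : lvl G r0 r' ≤ lvl G r0 r + 1 := dist_le_succ_of_adj hc hadj
    have h2 : lvl G r0 r ≤ lvl G r0 r' + 1 := dist_le_succ_of_adj hc hadj.symm
    have htie : G.d i r k ≠ G.d i r' k' :=
      G.tie i r hr r' hr' k hk1 hkN k' hk1' hkN' (Or.inl hrr)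
    rcases (by omega : lvl G r0 r = lvl G r0 r' + 1 ∨ lvl G r0 r' = lvl G r0 r + 1) with hcase | hcase
    · have hrne : r ≠ r0 := by
        intro h; rw [h, lvl_r0] at hcase; omega
      have hpar : par G r0 r = r' := by
        obtain ⟨ha, hb⟩ := par_spec (r0 := r0) hc hrne
        exact parent_unique ht ha hb hadj.symm (by omega)
      have hBr := hB r hrne i hr (by rw [hpar]; exact hr') k hk1 hkN k' hk1' hkN'
      rw [hpar] at hBr
      constructor
      · exact hBr.1
      · intro hphi
        by_contra hcon
        have : G.d i r' k' < G.d i r k := by omega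
        exact lt_asymm hphi (hBr.2 this)
    · have hrne : r' ≠ r0 := by
        intro h; rw [h, lvl_r0] at hcase; omega
      have hpar : par G r0 r' = r := by
        obtain ⟨ha, hb⟩ := par_spec (r0 := r0) hc hrne
        exact parent_unique ht ha hb hadj (by omega)
      have hBr := hB r' hrne i hr' (by rw [hpar]; exact hr) k' hk1' hkN' k hk1 hkN
      rw [hpar] at hBr
      constructor
      · exact hBr.2
      · intro hphi
        by_contra hcon
        have : G.d i r' k' < G.d i r k := by omega
        exact lt_asymm hphi (hBr.1 this)

noncomputable def ValsSet (G : PSGame N R) (r0 : R) : Finset ℚ :=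
  (Finset.univ ×ˢ Finset.Icc 1 N).image fun q : R × ℕ => phi G r0 q.1 q.2

noncomputable def cb (G : PSGame N R) (r0 : R) (x : ℚ) : ℕ :=
  ((ValsSet G r0).filter fun y => y < x).card

noncomputable def Dfun (G : PSGame N R) (r0 : R) (r : R) (k : ℕ) : ℕ :=
  cb G r0 (phi G r0 r (min (max k 1) N)) * (N + 1) + k

lemma cb_mono {a b : ℚ} (h : a ≤ b) : cb G r0 a ≤ cb G r0 b := by
  apply Finset.card_le_card
  intro y hy
  rw [Finset.mem_filter] at hy ⊢
  exact ⟨hy.1, lt_of_lt_of_le hy.2 h⟩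

lemma cb_lt {r : R} {k : ℕ} (hk1 : 1 ≤ k) (hkN : k ≤ N) {x : ℚ}
    (h : phi G r0 r k < x) : cb G r0 (phi G r0 r k) < cb G r0 x := by
  apply Finset.card_lt_card
  rw [Finset.ssubset_iff_of_subset]
  · refine ⟨phi G r0 r k, ?_, ?_⟩
    · rw [Finset.mem_filter]
      refine ⟨?_, h⟩
      rw [ValsSet, Finset.mem_image]
      exact ⟨(r, k), by simp [Finset.mem_Icc, hk1, hkN], rfl⟩
    · rw [Finset.mem_filter]
      rintro ⟨-, hlt⟩
      exact lt_irrefl _ hlt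
  · intro y hy
    rw [Finset.mem_filter] at hy ⊢
    exact ⟨hy.1, lt_trans hy.2 h⟩

lemma Dfun_strictMono (hN : 1 ≤ N) (hcard : ∀ i, (G.strat i).card = 2)
    (hinj : Function.Injective G.strat) (ht : G.graph.IsTree) (r : R) :
    StrictMono (Dfun G r0 r) := by
  have hA : ∀ k k', 1 ≤ k → k' ≤ N → k < k' → phi G r0 r k < phi G r0 r k' :=
    (inv hN hcard hinj ht (lvl G r0 r) r rfl).1
  intro k k2 hlt
  have hcm : min (max k 1) N ≤ min (max k2 1) N := by omega
  have hphile : phi G r0 r (min (max k 1) N) ≤ phi G r0 r (min (max k2 1) N) := by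
    rcases Nat.eq_or_lt_of_le hcm with heq | hlt2
    · rw [heq]
    · exact le_of_lt (hA _ _ (by omega) (by omega) hlt2)
  have hcb := cb_mono (G := G) (r0 := r0) hphile
  unfold Dfun
  have := Nat.mul_le_mul_right (N + 1) hcb
  omega

lemma Dlt_iff (hN : 1 ≤ N) (hcard : ∀ i, (G.strat i).card = 2)
    (hinj : Function.Injective G.strat) (ht : G.graph.IsTree)
    {i : Fin N} {r r' : R} (hr : r ∈ G.strat i) (hr' : r' ∈ G.strat i)
    {k k' : ℕ} (hk1 : 1 ≤ k) (hkN : k ≤ N) (hk1' : 1 ≤ k') (hkN' : k' ≤ N) :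
    G.d i r k < G.d i r' k' ↔ Dfun G r0 r k < Dfun G r0 r' k' := by
  have haux : ∀ (a b : R), a ∈ G.strat i → b ∈ G.strat i → ∀ (ka kb : ℕ),
      1 ≤ ka → ka ≤ N → 1 ≤ kb → kb ≤ N →
      G.d i a ka < G.d i b kb → Dfun G r0 a ka < Dfun G r0 b kb := by
    intro a b ha hb ka kb hka1 hkaN hkb1 hkbN hd
    have hphi := (pres (r0 := r0) hN hcard hinj ht i a ha b hb ka hka1 hkaN kb hkb1 hkbN).1 hd
    have hca : min (max ka 1) N = ka := by omega
    have hcb' : min (max kb 1) N = kb := by omega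
    have hcblt : cb G r0 (phi G r0 a ka) < cb G r0 (phi G r0 b kb) :=
      cb_lt hka1 hkaN hphi
    unfold Dfun
    rw [hca, hcb']
    have h7 : cb G r0 (phi G r0 a ka) * (N + 1) + (N + 1)
        ≤ cb G r0 (phi G r0 b kb) * (N + 1) := by
      rw [← Nat.succ_mul]
      exact Nat.mul_le_mul_right _ hcblt
    omega
  constructor
  · exact haux r r' hr hr' k k' hk1 hkN hk1' hkN'
  · intro hD
    rcases lt_trichotomy (G.d i r k) (G.d i r' k') with h | h | h
    · exact h
    · exfalso
      by_cases hrr : r = r'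
      · subst hrr
        have hkk : k = k' := by
          by_contra hkk
          exact G.tie i r hr r hr' k hk1 hkN k' hk1' hkN' (Or.inr hkk) h
        subst hkk
        exact lt_irrefl _ hD
      · exact G.tie i r hr r' hr' k hk1 hkN k' hk1' hkN' (Or.inl hrr) h
    · exact absurd (haux r' r hr' hr k' k hk1' hkN' hk1 hkN h) (Nat.lt_asymm hD)

lemma Dle_iff (hN : 1 ≤ N) (hcard : ∀ i, (G.strat i).card = 2)
    (hinj : Function.Injective G.strat) (ht : G.graph.IsTree)
    {i : Fin N} {r r' : R} (hr : r ∈ G.strat i) (hr' : r' ∈ G.strat i)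
    {k k' : ℕ} (hk1 : 1 ≤ k) (hkN : k ≤ N) (hk1' : 1 ≤ k') (hkN' : k' ≤ N) :
    (G.d i r k ≤ G.d i r' k' ↔ Dfun G r0 r k ≤ Dfun G r0 r' k') := by
  rw [← Nat.not_lt, ← Nat.not_lt]
  exact not_congr (Dlt_iff hN hcard hinj ht hr' hr hk1' hkN' hk1 hkN)

end TCDF
namespace TCDF

variable {N : ℕ} {R : Type} [Fintype R] [DecidableEq R] {G : PSGame N R} {r0 : R}

open SimpleGraph Finset

lemma congOf_le (S : GameState G.strat) (r : R) : congOf S r ≤ N := by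
  unfold congOf
  refine le_trans (Finset.card_filter_le _ _) ?_
  simp

lemma congOf_pos (S : GameState G.strat) (i : Fin N) : 1 ≤ congOf S (S.1 i) := by
  unfold congOf
  rw [Nat.one_le_iff_ne_zero, ← Nat.pos_iff_ne_zero, Finset.card_pos]
  exact ⟨i, by simp⟩

lemma congOf_lt (S : GameState G.strat) (i : Fin N) (r' : R) (hne : r' ≠ S.1 i) :
    congOf S r' + 1 ≤ N := by
  have hsub : (Finset.univ.filter fun j => S.1 j = r') ⊆ Finset.univ.erase i := by
    intro j hj
    rw [Finset.mem_filter] at hj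
    rw [Finset.mem_erase]
    refine ⟨?_, Finset.mem_univ j⟩
    rintro rfl
    exact hne hj.2.symm
  have hcard := Finset.card_le_card hsub
  rw [Finset.card_erase_of_mem (Finset.mem_univ i), Finset.card_univ, Fintype.card_fin] at hcard
  have hNpos : 0 < N := i.pos
  unfold congOf
  omega

lemma currentBR_iff (hN : 1 ≤ N) (hcard : ∀ i, (G.strat i).card = 2)
    (hinj : Function.Injective G.strat) (ht : G.graph.IsTree)
    (i : Fin N) (S : GameState G.strat) :
    CurrentBROf G.strat G.d S i ↔ CurrentBROf G.strat (fun _ r => Dfun G r0 r) S i := by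
  unfold CurrentBROf
  refine forall_congr' fun r' => forall_congr' fun h1 => forall_congr' fun h2 => ?_
  exact Dle_iff hN hcard hinj ht (S.2 i) h1
    (congOf_pos S i) (congOf_le S _) (by omega) (congOf_lt S i r' h2)

lemma stepBy_iff (hN : 1 ≤ N) (hcard : ∀ i, (G.strat i).card = 2)
    (hinj : Function.Injective G.strat) (ht : G.graph.IsTree)
    (i : Fin N) (S S' : GameState G.strat) :
    StepBy G.strat G.d i S S' ↔ StepBy G.strat (fun _ r => Dfun G r0 r) i S S' := by
  unfold StepBy
  constructor
  · rintro ⟨h1, h2, h3, h4, h5⟩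
    refine ⟨ (not_congr (currentBR_iff hN hcard hinj ht i S)).1 h1, h2, ?_, ?_, h5⟩
    · intro r' hr' hne
      exact (Dle_iff hN hcard hinj ht (S'.2 i) hr'
        (by omega) (congOf_lt S i _ h2) (by omega) (congOf_lt S i r' hne)).1 (h3 r' hr' hne)
    · exact (Dle_iff hN hcard hinj ht (S'.2 i) (S.2 i)
        (by omega) (congOf_lt S i _ h2) (congOf_pos S i) (congOf_le S _)).1 h4
  · rintro ⟨h1, h2, h3, h4, h5⟩
    refine ⟨ (not_congr (currentBR_iff hN hcard hinj ht i S)).2 h1, h2, ?_, ?_, h5⟩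
    · intro r' hr' hne
      exact (Dle_iff hN hcard hinj ht (S'.2 i) hr'
        (by omega) (congOf_lt S i _ h2) (by omega) (congOf_lt S i r' hne)).2 (h3 r' hr' hne)
    · exact (Dle_iff hN hcard hinj ht (S'.2 i) (S.2 i)
        (by omega) (congOf_lt S i _ h2) (congOf_pos S i) (congOf_le S _)).2 h4

end TCDF
/-- For every player-specific congestion game on a tree there exist common
strictly increasing delay functions `D r`, one for each resource, preserving every
player's type: for every player `i`, all resources `r, r' ∈ strat i` and all
congestion values `1 ≤ k, k' ≤ N`, `d i r k < d i r' k' ↔ D r k < D r' k'`.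
Consequently, the transition graph of the player-specific game equals the transition
graph of the standard singleton congestion game obtained by replacing each `d i r`
with `D r`. -/
theorem tree_common_delay_functions
    (N : ℕ) (R : Type) [Fintype R] [DecidableEq R]
    (G : PSGame N R) (htree : G.OnTree) :
    ∃ D : R → ℕ → ℕ,
      (∀ r, StrictMono (D r)) ∧
      (∀ i : Fin N, ∀ r ∈ G.strat i, ∀ r' ∈ G.strat i,
        ∀ k, 1 ≤ k → k ≤ N → ∀ k', 1 ≤ k' → k' ≤ N →
          (G.d i r k < G.d i r' k' ↔ D r k < D r' k')) ∧
      (∀ (i : Fin N) (S S' : GameState G.strat),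
        StepBy G.strat G.d i S S' ↔ StepBy G.strat (fun _ r => D r) i S S') := by
  obtain ⟨hcard, hinj, ht⟩ := htree
  by_cases hN0 : N = 0
  · subst hN0
    exact ⟨fun _ k => k, fun r => strictMono_id, fun i => i.elim0, fun i => i.elim0⟩
  · have hN : 1 ≤ N := by omega
    have hne : Nonempty R := ht.isConnected.nonempty
    obtain ⟨r0⟩ := hne
    refine ⟨TCDF.Dfun G r0, fun r => TCDF.Dfun_strictMono hN hcard hinj ht r, ?_, ?_⟩
    · intro i r hr r' hr' k hk1 hkN k' hk1' hkN'
      exact TCDF.Dlt_iff hN hcard hinj ht hr hr' hk1 hkN hk1' hkN'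
    · intro i S S'
      exact TCDF.stepBy_iff hN hcard hinj ht i S S'
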